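/- Let P, Q ∈ ℂ^{n×n} and λ ∈ ℂ, and suppose that P Q* + Q P* is positive semidefinite and that the n×2n matrix [P -Q] has rank n (where * denotes conjugate transpose). If z ∈ ℂ^n satisfies z*(P + Q) = 0, then z*P = 0 and z*Q = 0, and hence z = 0. In particular P + Q is nonsingular. -/

import Mathlib

open Matrix
open scoped ComplexOrder

open Matrix

theorem stmt_15 (n : ℕ) (P Q : Matrix (Fin n) (Fin n) ℂ)
    (hpsd : (P * Qᴴ + Q * Pᴴ).PosSemidef)
    (hrank : (Matrix.fromCols P (-Q)).rank = n) :
    (∀ z : Fin n → ℂ, Matrix.vecMul (star z) (P + Q) = 0 →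
      Matrix.vecMul (star z) P = 0 ∧ Matrix.vecMul (star z) Q = 0 ∧ z = 0) ∧
    IsUnit (P + Q) := by
  have hinj : Function.Injective (Matrix.fromCols P (-Q)).vecMul := by
    rw [Matrix.vecMul_injective_iff, linearIndependent_iff_card_eq_finrank_span,
      Set.finrank, ← Matrix.rank_eq_finrank_span_row, hrank, Fintype.card_fin]
  have key : ∀ z : Fin n → ℂ, Matrix.vecMul (star z) (P + Q) = 0 →
      Matrix.vecMul (star z) P = 0 ∧ Matrix.vecMul (star z) Q = 0 ∧ z = 0 := by
    intro z hz
    rw [Matrix.vecMul_add] at hz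
    have hP : Matrix.vecMul (star z) P = -(Matrix.vecMul (star z) Q) := by
      linear_combination (norm := module) hz
    have hQz : Qᴴ *ᵥ z = star (Matrix.vecMul (star z) Q) := by
      rw [mulVec_conjTranspose]
    have hPz : Pᴴ *ᵥ z = -(star (Matrix.vecMul (star z) Q)) := by
      rw [mulVec_conjTranspose, hP, star_neg]
    have e1 : star z ⬝ᵥ ((P * Qᴴ) *ᵥ z)
        = -(star (star (Matrix.vecMul (star z) Q)) ⬝ᵥ star (Matrix.vecMul (star z) Q)) := by
      rw [← mulVec_mulVec, dotProduct_mulVec, hP, hQz, neg_dotProduct, star_star]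
    have e2 : star z ⬝ᵥ ((Q * Pᴴ) *ᵥ z)
        = -(star (star (Matrix.vecMul (star z) Q)) ⬝ᵥ star (Matrix.vecMul (star z) Q)) := by
      rw [← mulVec_mulVec, dotProduct_mulVec, hPz, dotProduct_neg, star_star]
    have hq := hpsd.dotProduct_mulVec_nonneg z
    rw [add_mulVec, dotProduct_add, e1, e2] at hq
    set d := star (star (Matrix.vecMul (star z) Q)) ⬝ᵥ star (Matrix.vecMul (star z) Q) with hd
    have h0 : 0 ≤ d := dotProduct_star_self_nonneg _
    have hle : d ≤ 0 := by
      have h2 : d + d ≤ 0 := by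
        rw [← neg_add] at hq
        exact neg_nonneg.mp hq
      calc d ≤ d + d := le_add_of_nonneg_left h0
        _ ≤ 0 := h2
    have hdz : d = 0 := le_antisymm hle h0
    have hw0 : Matrix.vecMul (star z) Q = 0 := by
      have := dotProduct_star_self_eq_zero.mp hdz
      simpa using congrArg star this
    have hP0 : Matrix.vecMul (star z) P = 0 := by rw [hP, hw0, neg_zero]
    refine ⟨hP0, hw0, ?_⟩
    have hz0 : star z = 0 := by
      have h1 : Matrix.vecMul (star z) (Matrix.fromCols P (-Q)) =
          Matrix.vecMul 0 (Matrix.fromCols P (-Q)) := by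
        rw [Matrix.zero_vecMul]
        ext (i | i) <;> simp [Matrix.vecMul_fromCols, hP0, Matrix.vecMul_neg, hw0]
      exact hinj h1
    simpa using congrArg star hz0
  refine ⟨key, ?_⟩
  rw [← Matrix.vecMul_injective_iff_isUnit]
  intro u v huv
  have huv' : Matrix.vecMul u (P + Q) = Matrix.vecMul v (P + Q) := huv
  have h : Matrix.vecMul (u - v) (P + Q) = 0 := by
    rw [Matrix.sub_vecMul, huv', sub_self]
  have h2 := (key (star (u - v)) (by simpa using h)).2.2
  have : u - v = 0 := by simpa using congrArg star h2
  exact sub_eq_zero.mp this
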